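/- Let p ≥ 2 and let Q_wh = {z ∈ {0,1}^p : z_p ≤ ∑_{i=1}^{p−1} z_i}. Then conv(Q_wh \ {0}) = {z ∈ [0,1]^p : ∑_{i=1}^{p−1} z_i ≥ 1}. -/

import Mathlib

/-- Lemma: the convex hull of `Q_wh \ {0}`, where
`Q_wh = {z ∈ {0,1}^p : z_p ≤ ∑_{i ∈ [p-1]} z_i}`, equals
`{z ∈ [0,1]^p : ∑_{i ∈ [p-1]} z_i ≥ 1}`. -/
theorem statement12 (p : ℕ) (hp : 2 ≤ p) :
    convexHull ℝ
        ({z : Fin p → ℝ | (∀ i, z i = 0 ∨ z i = 1) ∧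
            z ⟨p - 1, by omega⟩ ≤ ∑ i ∈ Finset.univ.erase ⟨p - 1, by omega⟩, z i} \ {0}) =
      {z : Fin p → ℝ |
        (∀ i, z i ∈ Set.Icc (0 : ℝ) 1) ∧
        1 ≤ ∑ i ∈ Finset.univ.erase ⟨p - 1, by omega⟩, z i} := by
  have hlt : p - 1 < p := by omega
  set l : Fin p := ⟨p - 1, hlt⟩ with hldef
  show convexHull ℝ
        ({z : Fin p → ℝ | (∀ i, z i = 0 ∨ z i = 1) ∧
            z l ≤ ∑ i ∈ Finset.univ.erase l, z i} \ {0}) =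
      {z : Fin p → ℝ |
        (∀ i, z i ∈ Set.Icc (0 : ℝ) 1) ∧
        1 ≤ ∑ i ∈ Finset.univ.erase l, z i}
  set A : Finset (Fin p) := Finset.univ.erase l with hA
  set S : Set (Fin p → ℝ) :=
    {z | (∀ i, z i = 0 ∨ z i = 1) ∧ z l ≤ ∑ i ∈ A, z i} \ {0} with hS
  set T : Set (Fin p → ℝ) :=
    {z | (∀ i, z i ∈ Set.Icc (0 : ℝ) 1) ∧ 1 ≤ ∑ i ∈ A, z i} with hT
  -- S ⊆ T
  have hST : S ⊆ T := by
    rintro z ⟨⟨hzbin, hzle⟩, hz0⟩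
    have hnn : ∀ i ∈ A, (0:ℝ) ≤ z i := fun i _ => by
      rcases hzbin i with h | h <;> simp [h]
    refine ⟨fun i => by rcases hzbin i with h | h <;> simp [h], ?_⟩
    by_cases hone : ∃ i ∈ A, z i = 1
    · obtain ⟨i, hiA, hi1⟩ := hone
      have := Finset.single_le_sum hnn hiA
      linarith
    · push_neg at hone
      have hzero : ∀ i ∈ A, z i = 0 := fun i hi => (hzbin i).resolve_right (hone i hi)
      have hsum : ∑ i ∈ A, z i = 0 := Finset.sum_eq_zero hzero
      have hl0 : z l = 0 := by
        rw [hsum] at hzle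
        rcases hzbin l with h | h
        · exact h
        · linarith
      exfalso
      apply hz0
      have hz : z = 0 := by
        funext i
        by_cases hil : i = l
        · rw [hil]; exact hl0
        · exact hzero i (Finset.mem_erase.mpr ⟨hil, Finset.mem_univ i⟩)
      simp [hz]
  -- convexity of T
  have hTconv : Convex ℝ T := by
    intro x hx y hy a b ha hb hab
    refine ⟨fun i => ?_, ?_⟩
    · exact (convex_Icc (0:ℝ) 1) (hx.1 i) (hy.1 i) ha hb hab
    · have heq : ∑ i ∈ A, (a • x + b • y) i
          = a * ∑ i ∈ A, x i + b * ∑ i ∈ A, y i := by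
        simp [Finset.sum_add_distrib, Finset.mul_sum]
      show (1:ℝ) ≤ ∑ i ∈ A, (a • x + b • y) i
      rw [heq]
      nlinarith [hx.2, hy.2]
  -- closedness of T
  have hTclosed : IsClosed T := by
    have h1 : IsClosed {z : Fin p → ℝ | ∀ i, z i ∈ Set.Icc (0:ℝ) 1} := by
      have he : {z : Fin p → ℝ | ∀ i, z i ∈ Set.Icc (0:ℝ) 1}
          = ⋂ i, (fun z : Fin p → ℝ => z i) ⁻¹' (Set.Icc 0 1) := by
        ext w; simp
      rw [he]
      exact isClosed_iInter fun i => isClosed_Icc.preimage (continuous_apply i)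
    have h2 : IsClosed {z : Fin p → ℝ | 1 ≤ ∑ i ∈ A, z i} :=
      isClosed_le continuous_const (by continuity)
    have : T = {z : Fin p → ℝ | ∀ i, z i ∈ Set.Icc (0:ℝ) 1}
        ∩ {z : Fin p → ℝ | 1 ≤ ∑ i ∈ A, z i} := by
      rfl
    rw [this]
    exact h1.inter h2
  -- compactness of T
  have hTcomp : IsCompact T := by
    apply IsCompact.of_isClosed_subset (isCompact_Icc (a := (0 : Fin p → ℝ)) (b := 1)) hTclosed
    intro z hz
    constructor
    · intro i; exact (hz.1 i).1
    · intro i; exact (hz.1 i).2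
  -- S is finite
  have hSfin : S.Finite := by
    have hsub : S ⊆ Set.pi Set.univ (fun _ : Fin p => ({0, 1} : Set ℝ)) := by
      intro z hz
      rw [Set.mem_pi]
      intro i _
      rcases hz.1.1 i with h | h <;> simp [h]
    exact Set.Finite.subset
      (Set.Finite.pi fun _ => (Set.finite_singleton (1:ℝ)).insert 0) hsub
  -- extreme points of T are in S
  have hext : T.extremePoints ℝ ⊆ S := by
    intro z hz
    rw [mem_extremePoints] at hz
    obtain ⟨hzT, hzext⟩ := hz
    have hmid : ∀ δ : Fin p → ℝ, z = (1/2 : ℝ) • (z + δ) + (1/2 : ℝ) • (z - δ) := by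
      intro δ; funext i; simp; ring
    have key : ∀ δ : Fin p → ℝ, z + δ ∈ T → z - δ ∈ T → δ = 0 := by
      intro δ h1 h2
      have h3 := hzext _ h1 _ h2
        ⟨1/2, 1/2, by norm_num, by norm_num, by norm_num, (hmid δ).symm⟩
      have h4 : z + δ = z := h3.1
      exact add_eq_left.mp h4
    have hbin : ∀ i, z i = 0 ∨ z i = 1 := by
      by_contra hcon
      push_neg at hcon
      obtain ⟨j, hj0, hj1⟩ := hcon
      have hj01 : 0 < z j ∧ z j < 1 :=
        ⟨lt_of_le_of_ne (hzT.1 j).1 (Ne.symm hj0), lt_of_le_of_ne (hzT.1 j).2 hj1⟩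
      by_cases hjl : j = l
      · -- perturb the last coordinate only
        set ε : ℝ := min (z j) (1 - z j) with hε
        have hεpos : 0 < ε := lt_min hj01.1 (by linarith [hj01.2])
        set δ : Fin p → ℝ := fun i => if i = j then ε else 0 with hδ
        have hsum : ∀ c : ℝ, ∑ i ∈ A, (z i + c * δ i) = ∑ i ∈ A, z i := by
          intro c
          apply Finset.sum_congr rfl
          intro i hi
          have : i ≠ j := by rw [hjl]; exact (Finset.mem_erase.mp hi).1
          simp [hδ, this]
        have hεj : ε ≤ z j := min_le_left _ _
        have hεj' : ε ≤ 1 - z j := min_le_right _ _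
        have hδj : δ j = ε := by simp [hδ]
        have hδ0 : ∀ i, i ≠ j → δ i = 0 := fun i hij => by simp [hδ, hij]
        have hcoord : ∀ i, (z i + δ i ∈ Set.Icc (0:ℝ) 1) ∧ (z i - δ i ∈ Set.Icc (0:ℝ) 1) := by
          intro i
          by_cases hij : i = j
          · subst hij
            rw [hδj]
            exact ⟨Set.mem_Icc.mpr ⟨by linarith [hj01.1], by linarith⟩,
              Set.mem_Icc.mpr ⟨by linarith, by linarith [hj01.2]⟩⟩
          · rw [hδ0 i hij, add_zero, sub_zero]
            exact ⟨hzT.1 i, hzT.1 i⟩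
        have h1 : z + δ ∈ T := by
          refine ⟨fun i => by simpa using (hcoord i).1, ?_⟩
          have := hsum 1
          simp only [one_mul] at this
          show 1 ≤ ∑ i ∈ A, (z + δ) i
          simp only [Pi.add_apply]
          rw [this]; exact hzT.2
        have h2 : z - δ ∈ T := by
          refine ⟨fun i => by simpa using (hcoord i).2, ?_⟩
          have := hsum (-1)
          show 1 ≤ ∑ i ∈ A, (z - δ) i
          simp only [Pi.sub_apply]
          have heq : ∑ i ∈ A, (z i - δ i) = ∑ i ∈ A, (z i + (-1) * δ i) := by
            apply Finset.sum_congr rfl; intro i _; ring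
          rw [heq, this]; exact hzT.2
        have := congrFun (key δ h1 h2) j
        simp [hδ] at this
        exact absurd this (ne_of_gt hεpos)
      · -- j is not the last coordinate
        have hjA : j ∈ A := Finset.mem_erase.mpr ⟨hjl, Finset.mem_univ j⟩
        by_cases hslack : 1 < ∑ i ∈ A, z i
        · set ε : ℝ := min (min (z j) (1 - z j)) (∑ i ∈ A, z i - 1) with hε
          have hεpos : 0 < ε :=
            lt_min (lt_min hj01.1 (by linarith [hj01.2])) (by linarith)
          set δ : Fin p → ℝ := fun i => if i = j then ε else 0 with hδ
          have hδsum : ∑ i ∈ A, δ i = ε := by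
            rw [Finset.sum_eq_single_of_mem j hjA]
            · simp [hδ]
            · intro i _ hij; simp [hδ, hij]
          have hεj : ε ≤ z j := le_trans (min_le_left _ _) (min_le_left _ _)
          have hεj' : ε ≤ 1 - z j := le_trans (min_le_left _ _) (min_le_right _ _)
          have hεs : ε ≤ ∑ i ∈ A, z i - 1 := min_le_right _ _
          have hδj : δ j = ε := by simp [hδ]
          have hδ0 : ∀ i, i ≠ j → δ i = 0 := fun i hij => by simp [hδ, hij]
          have hcoord : ∀ i, (z i + δ i ∈ Set.Icc (0:ℝ) 1) ∧ (z i - δ i ∈ Set.Icc (0:ℝ) 1) := by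
            intro i
            by_cases hij : i = j
            · subst hij
              rw [hδj]
              exact ⟨Set.mem_Icc.mpr ⟨by linarith [hj01.1], by linarith⟩,
                Set.mem_Icc.mpr ⟨by linarith, by linarith [hj01.2]⟩⟩
            · rw [hδ0 i hij, add_zero, sub_zero]
              exact ⟨hzT.1 i, hzT.1 i⟩
          have h1 : z + δ ∈ T := by
            refine ⟨fun i => by simpa using (hcoord i).1, ?_⟩
            show 1 ≤ ∑ i ∈ A, (z + δ) i
            simp only [Pi.add_apply]
            rw [Finset.sum_add_distrib, hδsum]
            linarith [hzT.2]
          have h2 : z - δ ∈ T := by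
            refine ⟨fun i => by simpa using (hcoord i).2, ?_⟩
            show 1 ≤ ∑ i ∈ A, (z - δ) i
            simp only [Pi.sub_apply]
            rw [Finset.sum_sub_distrib, hδsum]
            linarith
          have := congrFun (key δ h1 h2) j
          simp [hδ] at this
          exact absurd this (ne_of_gt hεpos)
        · -- tight case: the sum equals 1, find a second fractional coordinate
          push_neg at hslack
          have hs1 : ∑ i ∈ A, z i = 1 := le_antisymm hslack hzT.2
          have hnn : ∀ i ∈ A, (0:ℝ) ≤ z i := fun i _ => (hzT.1 i).1
          -- find k ∈ A, k ≠ j with 0 < z k < 1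
          have hk : ∃ k ∈ A, k ≠ j ∧ 0 < z k ∧ z k < 1 := by
            by_contra hcon2
            push_neg at hcon2
            have hint : ∀ k ∈ A.erase j, z k = 0 ∨ z k = 1 := by
              intro k hk'
              obtain ⟨hkj, hkA⟩ := Finset.mem_erase.mp hk'
              by_contra hkk
              push_neg at hkk
              have h0 : 0 < z k := lt_of_le_of_ne (hzT.1 k).1 (Ne.symm hkk.1)
              have h1' : z k < 1 := lt_of_le_of_ne (hzT.1 k).2 hkk.2
              linarith [hcon2 k hkA hkj h0]
            by_cases hone : ∃ k ∈ A.erase j, z k = 1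
            · obtain ⟨k, hkA', hk1⟩ := hone
              have hkA : k ∈ A := Finset.mem_of_mem_erase hkA'
              have hkj : k ≠ j := (Finset.mem_erase.mp hkA').1
              have hsub : {j, k} ⊆ A := by
                intro i hi
                rcases Finset.mem_insert.mp hi with h | h
                · subst h; exact hjA
                · rw [Finset.mem_singleton.mp h]; exact hkA
              have := Finset.sum_le_sum_of_subset_of_nonneg hsub
                (fun i hi _ => hnn i hi)
              rw [Finset.sum_pair (Ne.symm hkj)] at this
              rw [hk1] at this
              linarith [hj01.1]
            · push_neg at hone
              have hz0' : ∀ k ∈ A.erase j, z k = 0 := fun k hk' =>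
                (hint k hk').resolve_right (hone k hk')
              have : ∑ i ∈ A, z i = z j := by
                rw [← Finset.add_sum_erase A z hjA, Finset.sum_eq_zero hz0', add_zero]
              rw [this] at hs1
              exact hj1 hs1
          obtain ⟨k, hkA, hkj, hk0, hk1⟩ := hk
          set ε : ℝ := min (min (z j) (1 - z j)) (min (z k) (1 - z k)) with hε
          have hεpos : 0 < ε := lt_min (lt_min hj01.1 (by linarith [hj01.2]))
            (lt_min hk0 (by linarith))
          set δ : Fin p → ℝ := fun i => if i = j then ε else if i = k then -ε else 0 with hδ
          have hδj : δ j = ε := by simp [hδ]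
          have hδk : δ k = -ε := by simp [hδ, hkj]
          have hδsum : ∑ i ∈ A, δ i = 0 := by
            have hsub : {j, k} ⊆ A := by
              intro i hi
              rcases Finset.mem_insert.mp hi with h | h
              · subst h; exact hjA
              · rw [Finset.mem_singleton.mp h]; exact hkA
            rw [← Finset.sum_subset hsub]
            · rw [Finset.sum_pair (Ne.symm hkj), hδj, hδk]; ring
            · intro i _ hi
              simp only [Finset.mem_insert, Finset.mem_singleton, not_or] at hi
              simp [hδ, hi.1, hi.2]
          have hεj : ε ≤ z j := le_trans (min_le_left _ _) (min_le_left _ _)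
          have hεj' : ε ≤ 1 - z j := le_trans (min_le_left _ _) (min_le_right _ _)
          have hεk : ε ≤ z k := le_trans (min_le_right _ _) (min_le_left _ _)
          have hεk' : ε ≤ 1 - z k := le_trans (min_le_right _ _) (min_le_right _ _)
          have hδ0 : ∀ i, i ≠ j → i ≠ k → δ i = 0 := fun i hij hik => by
            simp [hδ, hij, hik]
          have hcoord : ∀ i, (z i + δ i ∈ Set.Icc (0:ℝ) 1) ∧ (z i - δ i ∈ Set.Icc (0:ℝ) 1) := by
            intro i
            by_cases hij : i = j
            · subst hij
              rw [hδj]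
              exact ⟨Set.mem_Icc.mpr ⟨by linarith [hj01.1], by linarith⟩,
                Set.mem_Icc.mpr ⟨by linarith, by linarith [hj01.2]⟩⟩
            · by_cases hik : i = k
              · subst hik
                rw [hδk]
                exact ⟨Set.mem_Icc.mpr ⟨by linarith, by linarith [hk1]⟩,
                  Set.mem_Icc.mpr ⟨by linarith [hk0], by linarith⟩⟩
              · rw [hδ0 i hij hik, add_zero, sub_zero]
                exact ⟨hzT.1 i, hzT.1 i⟩
          have h1 : z + δ ∈ T := by
            refine ⟨fun i => by simpa using (hcoord i).1, ?_⟩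
            show 1 ≤ ∑ i ∈ A, (z + δ) i
            simp only [Pi.add_apply]
            rw [Finset.sum_add_distrib, hδsum, add_zero]
            exact hzT.2
          have h2 : z - δ ∈ T := by
            refine ⟨fun i => by simpa using (hcoord i).2, ?_⟩
            show 1 ≤ ∑ i ∈ A, (z - δ) i
            simp only [Pi.sub_apply]
            rw [Finset.sum_sub_distrib, hδsum, sub_zero]
            exact hzT.2
          have := congrFun (key δ h1 h2) j
          rw [hδj] at this
          exact absurd this (ne_of_gt hεpos)
    -- z is binary and in T, hence in S
    refine ⟨⟨hbin, le_trans (hzT.1 l).2 hzT.2⟩, ?_⟩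
    intro h0
    rw [Set.mem_singleton_iff] at h0
    have := hzT.2
    rw [h0] at this
    simp at this
    linarith
  -- conclude
  apply subset_antisymm
  · exact convexHull_min hST hTconv
  · have hKM := closure_convexHull_extremePoints hTcomp hTconv
    calc T = closure (convexHull ℝ (T.extremePoints ℝ)) := hKM.symm
      _ ⊆ closure (convexHull ℝ S) := closure_mono (convexHull_mono hext)
      _ = convexHull ℝ S := (hSfin.isClosed_convexHull (𝕜 := ℝ)).closure_eq
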